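/- For K ∈ (0,1) and s,t > 0: ∫₀^∞ (1-e^(-rt))(1-e^(-rs)) r^(-(1+K)) dr = (Γ(1-K)/K)·(t^K + s^K - (t+s)^K). -/

import Mathlib

open Real MeasureTheory Filter

lemma int1 {K : ℝ} (hK0 : 0 < K) (hK1 : K < 1) {t : ℝ} (ht : 0 < t) :
    MeasureTheory.IntegrableOn
      (fun r : ℝ => (1 - Real.exp (-(r * t))) * r ^ (-(1 + K))) (Set.Ioi 0) := by
  rw [← Set.Ioc_union_Ioi_eq_Ioi (zero_le_one : (0:ℝ) ≤ 1), MeasureTheory.integrableOn_union]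
  constructor
  · -- on Ioc 0 1, dominate by t * x ^ (1 - (1+K)) = t * x ^ (-K)
    have hg : MeasureTheory.IntegrableOn (fun x : ℝ => t * x ^ (-K)) (Set.Ioc (0:ℝ) 1) := by
      have := intervalIntegral.intervalIntegrable_rpow' (show (-1:ℝ) < -K by linarith)
        (a := 0) (b := 1)
      rw [intervalIntegrable_iff_integrableOn_Ioc_of_le zero_le_one] at this
      exact this.const_mul t
    refine MeasureTheory.Integrable.mono' hg ?_ ?_
    · apply ContinuousOn.aestronglyMeasurable ?_ measurableSet_Ioc
      apply ContinuousOn.mul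
      · exact (Continuous.sub continuous_const
          (Real.continuous_exp.comp (continuous_id.mul continuous_const).neg)).continuousOn
      · intro x hx
        exact (Real.continuousAt_rpow_const x _ (Or.inl (ne_of_gt hx.1))).continuousWithinAt
    · filter_upwards [MeasureTheory.ae_restrict_mem measurableSet_Ioc] with x hx
      have hx0 : 0 < x := hx.1
      have hxp : 0 < x ^ (-(1+K)) := Real.rpow_pos_of_pos hx0 _
      have he0 : Real.exp (-(x * t)) ≤ 1 :=
        Real.exp_le_one_iff.mpr (by nlinarith)
      have he1 : 1 - Real.exp (-(x * t)) ≤ x * t := by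
        nlinarith [Real.add_one_le_exp (-(x * t))]
      rw [Real.norm_eq_abs,
        abs_of_nonneg (mul_nonneg (by linarith) hxp.le)]
      have hxk : x * x ^ (-(1+K)) = x ^ (-K) := by
        rw [show (-K) = 1 + -(1+K) by ring, Real.rpow_add hx0, Real.rpow_one]
      nlinarith [mul_le_mul_of_nonneg_right he1 hxp.le]
  · -- on Ioi 1, dominate by x ^ (-(1+K))
    have hg : MeasureTheory.IntegrableOn (fun x : ℝ => x ^ (-(1+K))) (Set.Ioi (1:ℝ)) :=
      integrableOn_Ioi_rpow_of_lt (by linarith) zero_lt_one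
    refine MeasureTheory.Integrable.mono' hg ?_ ?_
    · apply ContinuousOn.aestronglyMeasurable ?_ measurableSet_Ioi
      apply ContinuousOn.mul
      · exact (Continuous.sub continuous_const
          (Real.continuous_exp.comp (continuous_id.mul continuous_const).neg)).continuousOn
      · intro x hx
        have hx0 : (0:ℝ) < x := lt_trans zero_lt_one hx
        exact (Real.continuousAt_rpow_const x _ (Or.inl (ne_of_gt hx0))).continuousWithinAt
    · filter_upwards [MeasureTheory.ae_restrict_mem measurableSet_Ioi] with x hx
      have hx0 : (0:ℝ) < x := lt_trans zero_lt_one hx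
      have hxp : 0 < x ^ (-(1+K)) := Real.rpow_pos_of_pos hx0 _
      have he0 : Real.exp (-(x * t)) ≤ 1 :=
        Real.exp_le_one_iff.mpr (by nlinarith)
      have he2 : 0 < Real.exp (-(x * t)) := Real.exp_pos _
      rw [Real.norm_eq_abs, abs_of_nonneg (mul_nonneg (by linarith) hxp.le)]
      nlinarith [mul_le_mul_of_nonneg_right
        (show 1 - Real.exp (-(x * t)) ≤ 1 by linarith) hxp.le]

lemma key {K : ℝ} (hK0 : 0 < K) (hK1 : K < 1) {t : ℝ} (ht : 0 < t) :
    ∫ r in Set.Ioi (0:ℝ), (1 - Real.exp (-(r * t))) * r ^ (-(1 + K))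
      = (Real.Gamma (1 - K) / K) * t ^ K := by
  set u : ℝ → ℝ := fun x => 1 - Real.exp (-(x * t)) with hu_def
  set u' : ℝ → ℝ := fun x => t * Real.exp (-(x * t)) with hu'_def
  set v : ℝ → ℝ := fun x => -(x ^ (-K)) / K with hv_def
  set v' : ℝ → ℝ := fun x => x ^ (-(1 + K)) with hv'_def
  have hu : ∀ x ∈ Set.Ioi (0:ℝ), HasDerivAt u (u' x) x := by
    intro x _
    have h1 : HasDerivAt (fun y : ℝ => -(y * t)) (-t) x := by
      exact (hasDerivAt_mul_const t).neg
    have h2 := (h1.exp).const_sub 1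
    refine h2.congr_deriv (Eq.symm ?_)
    simp [hu'_def]
    ring
  have hv : ∀ x ∈ Set.Ioi (0:ℝ), HasDerivAt v (v' x) x := by
    intro x hx
    have h1 : HasDerivAt (fun y : ℝ => y ^ (-K)) (-K * x ^ (-K - 1)) x :=
      Real.hasDerivAt_rpow_const (Or.inl (ne_of_gt hx))
    have h2 := (h1.neg).div_const K
    refine h2.congr_deriv (Eq.symm ?_)
    rw [hv'_def]
    simp only []
    rw [show -(1+K) = -K - 1 by ring]
    field_simp
  have huv' : MeasureTheory.IntegrableOn (u * v') (Set.Ioi 0) := int1 hK0 hK1 ht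
  have hu'v : MeasureTheory.IntegrableOn (u' * v) (Set.Ioi 0) := by
    have h0 := (integrableOn_rpow_mul_exp_neg_mul_rpow
      (show (-1:ℝ) < -K by linarith) zero_lt_one ht).const_mul (-t/K)
    refine MeasureTheory.IntegrableOn.congr_fun h0 ?_ measurableSet_Ioi
    intro x hx
    simp only [Pi.mul_apply, hu'_def, hv_def]
    rw [Real.rpow_one, show -t * x = -(x * t) by ring]
    ring
  have hx1K : Tendsto (fun x : ℝ => x ^ (1 - K)) (nhdsWithin 0 (Set.Ioi 0)) (nhds 0) := by
    have hc : ContinuousAt (fun x : ℝ => x ^ (1 - K)) 0 :=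
      Real.continuousAt_rpow_const 0 (1 - K) (Or.inr (by linarith))
    have h2 : Filter.Tendsto (fun x : ℝ => x ^ (1 - K)) (nhds 0) (nhds ((0:ℝ) ^ (1 - K))) :=
      hc.tendsto
    rw [Real.zero_rpow (by linarith : (1:ℝ) - K ≠ 0)] at h2
    exact h2.mono_left nhdsWithin_le_nhds
  have h_zero : Tendsto (u * v) (nhdsWithin 0 (Set.Ioi 0)) (nhds 0) := by
    have hlow : Tendsto (fun x : ℝ => -(t/K) * x ^ (1 - K)) (nhdsWithin 0 (Set.Ioi 0)) (nhds 0) := by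
      have := hx1K.const_mul (-(t/K))
      rwa [mul_zero] at this
    refine tendsto_of_tendsto_of_tendsto_of_le_of_le' hlow tendsto_const_nhds ?_ ?_
    · filter_upwards [self_mem_nhdsWithin] with x hx
      have hx0 : (0:ℝ) < x := hx
      have hxp : 0 < x ^ (-K) := Real.rpow_pos_of_pos hx0 _
      have he1 : 1 - Real.exp (-(x * t)) ≤ x * t := by
        nlinarith [Real.add_one_le_exp (-(x * t))]
      have h := mul_le_mul_of_nonneg_right he1 hxp.le
      have hxk : x ^ (1 - K) = x * x ^ (-K) := by
        rw [show (1:ℝ) - K = 1 + -K by ring, Real.rpow_add hx0, Real.rpow_one]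
      simp only [Pi.mul_apply, hu_def, hv_def, hxk]
      calc -(t/K) * (x * x ^ (-K)) = -(x * t * x ^ (-K)) / K := by ring
        _ ≤ -((1 - Real.exp (-(x * t))) * x ^ (-K)) / K := by gcongr
        _ = (1 - Real.exp (-(x * t))) * (-(x ^ (-K)) / K) := by ring
    · filter_upwards [self_mem_nhdsWithin] with x hx
      have hx0 : (0:ℝ) < x := hx
      have hxp : 0 < x ^ (-K) := Real.rpow_pos_of_pos hx0 _
      have he0 : Real.exp (-(x * t)) ≤ 1 := Real.exp_le_one_iff.mpr (by nlinarith)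
      simp only [Pi.mul_apply, hu_def, hv_def]
      have h4 : 0 ≤ (1 - Real.exp (-(x * t))) * (x ^ (-K) / K) :=
        mul_nonneg (by linarith) (by positivity)
      have h5 : (1 - Real.exp (-(x * t))) * (-(x ^ (-K)) / K)
          = -((1 - Real.exp (-(x * t))) * (x ^ (-K) / K)) := by ring
      rw [h5]
      linarith
  have h_infty : Tendsto (u * v) atTop (nhds 0) := by
    have hlow : Tendsto (fun x : ℝ => -(x ^ (-K)) / K) atTop (nhds 0) := by
      have := ((tendsto_rpow_neg_atTop hK0).neg).div_const K
      simpa using this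
    refine tendsto_of_tendsto_of_tendsto_of_le_of_le' hlow tendsto_const_nhds ?_ ?_
    · filter_upwards [Filter.eventually_gt_atTop 0] with x hx
      have hxp : 0 < x ^ (-K) := Real.rpow_pos_of_pos hx _
      have he0 : Real.exp (-(x * t)) ≤ 1 := Real.exp_le_one_iff.mpr (by nlinarith)
      have he2 : 0 < Real.exp (-(x * t)) := Real.exp_pos _
      simp only [Pi.mul_apply, hu_def, hv_def]
      have h3 : 0 ≤ Real.exp (-(x * t)) * x ^ (-K) / K := by positivity
      have h5 : (1 - Real.exp (-(x * t))) * (-(x ^ (-K)) / K) - (-(x ^ (-K)) / K)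
          = Real.exp (-(x * t)) * x ^ (-K) / K := by ring
      linarith
    · filter_upwards [Filter.eventually_gt_atTop 0] with x hx
      have hxp : 0 < x ^ (-K) := Real.rpow_pos_of_pos hx _
      have he0 : Real.exp (-(x * t)) ≤ 1 := Real.exp_le_one_iff.mpr (by nlinarith)
      simp only [Pi.mul_apply, hu_def, hv_def]
      have h4 : 0 ≤ (1 - Real.exp (-(x * t))) * (x ^ (-K) / K) :=
        mul_nonneg (by linarith) (by positivity)
      have h5 : (1 - Real.exp (-(x * t))) * (-(x ^ (-K)) / K)
          = -((1 - Real.exp (-(x * t))) * (x ^ (-K) / K)) := by ring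
      rw [h5]
      linarith
  have hibp := MeasureTheory.integral_Ioi_mul_deriv_eq_deriv_mul hu hv huv' hu'v h_zero h_infty
  have hgamma : ∫ x in Set.Ioi (0:ℝ), u' x * v x
      = (-t/K) * ((1/t) ^ (1 - K) * Real.Gamma (1 - K)) := by
    have hG := integral_rpow_mul_exp_neg_mul_Ioi (show (0:ℝ) < 1 - K by linarith) ht
    rw [show ∫ x in Set.Ioi (0:ℝ), u' x * v x
        = ∫ x in Set.Ioi (0:ℝ), (-t/K) * (x ^ ((1 - K) - 1) * Real.exp (-(t * x))) from ?_]
    · rw [MeasureTheory.integral_const_mul, hG]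
    · refine MeasureTheory.setIntegral_congr_fun measurableSet_Ioi ?_
      intro x hx
      simp only [hu'_def, hv_def]
      rw [show (1:ℝ) - K - 1 = -K by ring, show -(t * x) = -(x * t) by ring]
      ring
  have hpow : (1/t) ^ (1 - K) = t ^ (K - 1) := by
    rw [one_div, ← Real.rpow_neg_one t, ← Real.rpow_mul ht.le]
    congr 1
    ring
  have htK : t ^ K = t * t ^ (K - 1) := by
    rw [show K = 1 + (K - 1) by ring, Real.rpow_add ht, Real.rpow_one]
    ring_nf
  have : ∫ x in Set.Ioi (0:ℝ), u x * v' x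
      = 0 - 0 - ((-t/K) * ((1/t) ^ (1 - K) * Real.Gamma (1 - K))) := by
    rw [← hgamma]; exact hibp
  rw [show (∫ r in Set.Ioi (0:ℝ), (1 - Real.exp (-(r * t))) * r ^ (-(1 + K)))
      = ∫ x in Set.Ioi (0:ℝ), u x * v' x from rfl, this, hpow, htK]
  field_simp
  ring

theorem stmt_14 (K : ℝ) (hK : K ∈ Set.Ioo (0:ℝ) 1) (s t : ℝ) (hs : 0 < s) (ht : 0 < t) :
    ∫ r in Set.Ioi (0:ℝ),
        (1 - Real.exp (-(r * t))) * (1 - Real.exp (-(r * s))) * r ^ (-(1 + K))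
      = (Real.Gamma (1 - K) / K) * (t ^ K + s ^ K - (t + s) ^ K) := by
  obtain ⟨hK0, hK1⟩ := hK
  have hst : 0 < t + s := by linarith
  have h1 := int1 hK0 hK1 ht
  have h2 := int1 hK0 hK1 hs
  have h3 := int1 hK0 hK1 hst
  have heq : Set.EqOn
      (fun r : ℝ => (1 - Real.exp (-(r * t))) * (1 - Real.exp (-(r * s))) * r ^ (-(1 + K)))
      (fun r : ℝ => (1 - Real.exp (-(r * t))) * r ^ (-(1 + K))
        + (1 - Real.exp (-(r * s))) * r ^ (-(1 + K))
        - (1 - Real.exp (-(r * (t + s)))) * r ^ (-(1 + K))) (Set.Ioi 0) := by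
    intro r _
    simp only []
    have : Real.exp (-(r * (t + s))) = Real.exp (-(r * t)) * Real.exp (-(r * s)) := by
      rw [← Real.exp_add]; congr 1; ring
    rw [this]; ring
  have h12 : MeasureTheory.IntegrableOn
      (fun r : ℝ => (1 - Real.exp (-(r * t))) * r ^ (-(1 + K))
        + (1 - Real.exp (-(r * s))) * r ^ (-(1 + K))) (Set.Ioi 0) := h1.add h2
  rw [MeasureTheory.setIntegral_congr_fun measurableSet_Ioi heq,
    MeasureTheory.integral_sub h12 h3,
    MeasureTheory.integral_add h1 h2,
    key hK0 hK1 ht, key hK0 hK1 hs, key hK0 hK1 hst]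
  ring
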